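/- For any k ≥ 2 unit vectors ξ₁,…,ξ_k in ℝ³ spanning configurations in general position, after applying a suitable conformal transformation of S² to the points ξ_j, there exist positive real numbers f₁,…,f_k with f₁ξ₁ + ⋯ + f_kξ_k = 0. Precisely: for any k ≥ 2 distinct points on S², there is a Möbius transformation of S² moving them to points whose position vectors admit a vanishing positive linear combination. -/

import Mathlib

/-- The Minkowski quadratic form on ℝ⁴. -/
def minkowskiForm (y : Fin 4 → ℝ) : ℝ := y 0 ^ 2 - y 1 ^ 2 - y 2 ^ 2 - y 3 ^ 2

/-- A map of the unit sphere S² ⊂ ℝ³ is a Möbius transformation if it is induced by a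
Lorentz transformation of ℝ^{1,3} acting projectively on the light cone: for each unit
vector x, the lift (1, x) is carried by A to a vector with positive time component whose
projectivization gives the image point. -/
def IsMoebiusS2 (T : EuclideanSpace ℝ (Fin 3) → EuclideanSpace ℝ (Fin 3)) : Prop :=
  ∃ A : Matrix (Fin 4) (Fin 4) ℝ,
    (∀ y : Fin 4 → ℝ, minkowskiForm (A.mulVec y) = minkowskiForm y) ∧
    ∀ x : EuclideanSpace ℝ (Fin 3), ‖x‖ = 1 →
      0 < A.mulVec (Fin.cons 1 (fun i => x i)) 0 ∧
      T x = (WithLp.equiv 2 (Fin 3 → ℝ)).symm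
        ((A.mulVec (Fin.cons 1 (fun i => x i)) 0)⁻¹ •
          fun i : Fin 3 => A.mulVec (Fin.cons 1 (fun j => x j)) i.succ)

private lemma boost_key (k m t d S w2 : ℝ) (hm : m ≠ 0) (hkm : k + m ≠ 0)
    (hS : S = k^2 - m^2) :
    ((k*t - d)/m)^2 - (w2 + 2*(d/(m*(k+m)) - t/m)*d
      + (d/(m*(k+m)) - t/m)^2*S) = t^2 - w2 := by
  subst hS; field_simp; ring

set_option maxHeartbeats 2000000 in
/-- Any k ≥ 2 distinct points on S² can be moved by a Möbius transformation of S² to a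
configuration balanced with positive weights. -/
theorem moebius_balancing (k : ℕ) (hk : 2 ≤ k)
    (ξ : Fin k → EuclideanSpace ℝ (Fin 3)) (hunit : ∀ j, ‖ξ j‖ = 1)
    (hdist : Function.Injective ξ) :
    ∃ T : EuclideanSpace ℝ (Fin 3) → EuclideanSpace ℝ (Fin 3), IsMoebiusS2 T ∧
      ∃ f : Fin k → ℝ, (∀ j, 0 < f j) ∧ ∑ j, f j • T (ξ j) = 0 := by
  have hk0 : (0:ℝ) < (k:ℝ) := by
    have : 0 < k := by omega
    exact_mod_cast this
  -- the sum vector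
  set u : Fin 3 → ℝ := fun i => ∑ j, ξ j i with hu
  set S : ℝ := u 0 ^ 2 + u 1 ^ 2 + u 2 ^ 2 with hSdef
  have hS0 : 0 ≤ S := by positivity
  -- the Euclidean sum vector
  set Ξ : EuclideanSpace ℝ (Fin 3) := ∑ j, ξ j with hΞ
  have hΞi : ∀ i, Ξ i = u i := by
    intro i
    simp [hΞ, hu]
  have hSnorm : S = ‖Ξ‖ ^ 2 := by
    rw [EuclideanSpace.norm_eq, Real.sq_sqrt (by positivity)]
    simp [Fin.sum_univ_three, hΞi, hSdef]
  -- S < k²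
  have hinner : ∀ a b : Fin k, (inner ℝ (ξ a) (ξ b) : ℝ) ≤ 1 := by
    intro a b
    calc (inner ℝ (ξ a) (ξ b) : ℝ) ≤ ‖ξ a‖ * ‖ξ b‖ := real_inner_le_norm _ _
    _ = 1 := by rw [hunit, hunit, mul_one]
  have hSk : S < (k:ℝ)^2 := by
    have h1 : ‖Ξ‖^2 = ∑ a : Fin k, ∑ b : Fin k, (inner ℝ (ξ a) (ξ b) : ℝ) := by
      rw [← real_inner_self_eq_norm_sq, hΞ, sum_inner]
      exact Finset.sum_congr rfl fun a _ => inner_sum _ _ _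
    have i0 : Fin k := ⟨0, by omega⟩
    have h2 : ∑ a : Fin k, ∑ b : Fin k, (inner ℝ (ξ a) (ξ b) : ℝ)
        < ∑ _a : Fin k, (k:ℝ) := by
      apply Finset.sum_lt_sum
      · intro a _
        calc ∑ b, (inner ℝ (ξ a) (ξ b) : ℝ) ≤ ∑ _b : Fin k, (1:ℝ) :=
              Finset.sum_le_sum fun b _ => hinner a b
          _ = (k:ℝ) := by simp
      · refine ⟨⟨0, by omega⟩, Finset.mem_univ _, ?_⟩
        have hne : ξ ⟨0, by omega⟩ ≠ ξ ⟨1, by omega⟩ := fun h => by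
          have := hdist h
          simp [Fin.ext_iff] at this
        calc ∑ b, (inner ℝ (ξ ⟨0, by omega⟩) (ξ b) : ℝ)
            < ∑ _b : Fin k, (1:ℝ) := by
              apply Finset.sum_lt_sum (fun b _ => hinner _ b)
              refine ⟨⟨1, by omega⟩, Finset.mem_univ _, ?_⟩
              exact (inner_lt_one_iff_real_of_norm_eq_one (hunit _) (hunit _)).mpr hne
          _ = (k:ℝ) := by simp
    have h3 : ∑ _a : Fin k, (k:ℝ) = (k:ℝ)^2 := by simp [sq]
    rw [hSnorm, h1]
    rw [h3] at h2
    exact h2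
  set m : ℝ := Real.sqrt ((k:ℝ)^2 - S) with hmdef
  have hm0 : 0 < m := Real.sqrt_pos.mpr (by linarith)
  have hm2 : m ^ 2 = (k:ℝ)^2 - S := Real.sq_sqrt (by linarith)
  have hkm : 0 < (k:ℝ) + m := by linarith
  have hSm : S = (k:ℝ)^2 - m^2 := by linarith
  -- the boost matrix
  set A : Matrix (Fin 4) (Fin 4) ℝ :=
    !![(k:ℝ)/m, -u 0/m, -u 1/m, -u 2/m;
       -u 0/m, 1 + u 0*u 0/(m*((k:ℝ)+m)), u 0*u 1/(m*((k:ℝ)+m)), u 0*u 2/(m*((k:ℝ)+m));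
       -u 1/m, u 1*u 0/(m*((k:ℝ)+m)), 1 + u 1*u 1/(m*((k:ℝ)+m)), u 1*u 2/(m*((k:ℝ)+m));
       -u 2/m, u 2*u 0/(m*((k:ℝ)+m)), u 2*u 1/(m*((k:ℝ)+m)), 1 + u 2*u 2/(m*((k:ℝ)+m))]
    with hA
  -- explicit mulVec components
  have hmul0 : ∀ y : Fin 4 → ℝ, A.mulVec y 0
      = ((k:ℝ)*y 0 - (u 0*y 1 + u 1*y 2 + u 2*y 3))/m := by
    intro y
    simp [hA, Matrix.mulVec, dotProduct, Fin.sum_univ_four]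
    ring
  have hm' : m ≠ 0 := hm0.ne'
  have hkm' : (k:ℝ) + m ≠ 0 := hkm.ne'
  have hmuls : ∀ y : Fin 4 → ℝ, ∀ i : Fin 3, A.mulVec y i.succ
      = y i.succ + u i * ((u 0*y 1 + u 1*y 2 + u 2*y 3)/(m*((k:ℝ)+m)) - y 0/m) := by
    intro y i
    fin_cases i <;>
      · simp [hA, Matrix.mulVec, dotProduct, Fin.sum_univ_four,
          show (Fin.succ (0:Fin 3)) = (1:Fin 4) from rfl,
          show (Fin.succ (1:Fin 3)) = (2:Fin 4) from rfl,
          show (Fin.succ (2:Fin 3)) = (3:Fin 4) from rfl]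
        all_goals ring
  -- Lorentz property
  have hLorentz : ∀ y : Fin 4 → ℝ, minkowskiForm (A.mulVec y) = minkowskiForm y := by
    intro y
    have e1 : ((1:Fin 3).succ : Fin 4) = 2 := rfl
    have e2 : ((2:Fin 3).succ : Fin 4) = 3 := rfl
    have e0 : ((0:Fin 3).succ : Fin 4) = 1 := rfl
    have h0 := hmul0 y
    have h1 := hmuls y 0
    have h2 := hmuls y 1
    have h3 := hmuls y 2
    rw [e0] at h1; rw [e1] at h2; rw [e2] at h3
    unfold minkowskiForm
    rw [h0, h1, h2, h3]
    have key := boost_key (k:ℝ) m (y 0) (u 0*y 1 + u 1*y 2 + u 2*y 3) S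
      (y 1^2 + y 2^2 + y 3^2) hm0.ne' hkm.ne' hSm
    rw [hSdef] at key
    linear_combination key
  -- positivity of the time component
  have hpos : ∀ x : EuclideanSpace ℝ (Fin 3), ‖x‖ = 1 →
      0 < A.mulVec (Fin.cons 1 (fun i => x i)) 0 := by
    intro x hx
    have hc : ∀ i : Fin 3, (Fin.cons 1 (fun i => x i) : Fin 4 → ℝ) i.succ = x i :=
      fun i => rfl
    rw [hmul0]
    have hb : u 0 * x 0 + u 1 * x 1 + u 2 * x 2 ≤ ‖Ξ‖ := by
      have : (inner ℝ Ξ x : ℝ) = u 0 * x 0 + u 1 * x 1 + u 2 * x 2 := by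
        simp [PiLp.inner_apply, RCLike.inner_apply, Fin.sum_univ_three, hΞi]
        ring
      calc u 0 * x 0 + u 1 * x 1 + u 2 * x 2 = (inner ℝ Ξ x : ℝ) := this.symm
        _ ≤ ‖Ξ‖ * ‖x‖ := real_inner_le_norm _ _
        _ = ‖Ξ‖ := by rw [hx, mul_one]
    have hΞk : ‖Ξ‖ < (k:ℝ) := by
      nlinarith [norm_nonneg Ξ, hSnorm, hSk]
    have : (Fin.cons 1 (fun i => x i) : Fin 4 → ℝ) 0 = 1 := rfl
    rw [this, show ((1:Fin 4)) = (0:Fin 3).succ from rfl, hc 0,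
      show ((2:Fin 4)) = (1:Fin 3).succ from rfl, hc 1,
      show ((3:Fin 4)) = (2:Fin 3).succ from rfl, hc 2]
    apply div_pos _ hm0
    have := hc 0
    nlinarith [hb, hΞk]
  -- define T
  set T : EuclideanSpace ℝ (Fin 3) → EuclideanSpace ℝ (Fin 3) := fun x =>
    (WithLp.equiv 2 (Fin 3 → ℝ)).symm
      ((A.mulVec (Fin.cons 1 (fun i => x i)) 0)⁻¹ •
        fun i : Fin 3 => A.mulVec (Fin.cons 1 (fun j => x j)) i.succ) with hT
  refine ⟨T, ⟨A, hLorentz, fun x hx => ⟨hpos x hx, rfl⟩⟩, ?_⟩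
  -- weights
  set n : Fin k → (Fin 4 → ℝ) := fun j => Fin.cons 1 (fun i => ξ j i) with hn
  set f : Fin k → ℝ := fun j => A.mulVec (n j) 0 with hf
  have hfpos : ∀ j, 0 < f j := fun j => hpos (ξ j) (hunit j)
  refine ⟨f, hfpos, ?_⟩
  -- linear equivalence
  set L := (WithLp.linearEquiv 2 ℝ (Fin 3 → ℝ)).symm with hL
  have hterm : ∀ j, f j • T (ξ j) = L (fun i : Fin 3 => A.mulVec (n j) i.succ) := by
    intro j
    have : T (ξ j) = L ((f j)⁻¹ • fun i : Fin 3 => A.mulVec (n j) i.succ) := rfl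
    rw [this, ← L.map_smul, smul_smul, mul_inv_cancel₀ (hfpos j).ne', one_smul]
  rw [Finset.sum_congr rfl fun j _ => hterm j, ← map_sum L (fun j => fun i : Fin 3 => A.mulVec (n j) i.succ) Finset.univ]
  have hzero : (∑ j, fun i : Fin 3 => A.mulVec (n j) i.succ) = (0 : Fin 3 → ℝ) := by
    funext i
    rw [Finset.sum_apply]
    have hsum : ∀ j, A.mulVec (n j) i.succ
        = -(u i)/m + ξ j i
          + u i * (u 0 * ξ j 0 + u 1 * ξ j 1 + u 2 * ξ j 2)/(m*((k:ℝ)+m)) := by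
      intro j
      rw [hmuls (n j) i]
      have h0 : n j (0 : Fin 4) = 1 := rfl
      have h1 : n j (1 : Fin 4) = ξ j 0 := rfl
      have h2 : n j (2 : Fin 4) = ξ j 1 := rfl
      have h3 : n j (3 : Fin 4) = ξ j 2 := rfl
      have hcons : (n j) i.succ = ξ j i := rfl
      rw [h0, h1, h2, h3, hcons]
      ring
    rw [Finset.sum_congr rfl fun j _ => hsum j]
    have hsplit : ∑ j : Fin k, (-(u i)/m + ξ j i
        + u i * (u 0 * ξ j 0 + u 1 * ξ j 1 + u 2 * ξ j 2)/(m*((k:ℝ)+m)))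
        = (k:ℝ) * (-(u i)/m) + u i + u i * S / (m*((k:ℝ)+m)) := by
      rw [Finset.sum_add_distrib, Finset.sum_add_distrib]
      have e1 : ∑ _j : Fin k, (-(u i)/m) = (k:ℝ) * (-(u i)/m) := by
        simp [mul_comm]
      have e2 : ∑ j : Fin k, ξ j i = u i := rfl
      have e3 : ∑ x : Fin k, u i * (u 0 * ξ x 0 + u 1 * ξ x 1 + u 2 * ξ x 2)/(m*((k:ℝ)+m))
          = u i * S/(m*((k:ℝ)+m)) := by
        rw [← Finset.sum_div, ← Finset.mul_sum]
        have e4 : ∑ x : Fin k, (u 0 * ξ x 0 + u 1 * ξ x 1 + u 2 * ξ x 2) = S := by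
          rw [Finset.sum_add_distrib, Finset.sum_add_distrib, ← Finset.mul_sum,
            ← Finset.mul_sum, ← Finset.mul_sum, hSdef, hu]
          ring
        rw [e4]
      rw [e1, e2, e3]
    rw [hsplit]
    show (k:ℝ) * (-(u i)/m) + u i + u i * S / (m*((k:ℝ)+m)) = (0:ℝ)
    field_simp
    linear_combination (u i) * hm2 - (u i) * hSdef
  rw [hzero, map_zero]
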